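/- In any group G with elements a, q satisfying a² q a² = q a² q, q² a q² = a q² a, and (a²q²)⁴ = 1, the element b := a⁻¹ q⁻² a⁻¹ satisfies b⁴ = 1 and (b a)³ = b². -/

import Mathlib

theorem stmt_19 {G : Type*} [Group G] (a q : G)
    (h1 : a ^ 2 * q * a ^ 2 = q * a ^ 2 * q)
    (h2 : q ^ 2 * a * q ^ 2 = a * q ^ 2 * a)
    (h3 : (a ^ 2 * q ^ 2) ^ 4 = 1) :
    (a⁻¹ * q⁻¹ ^ 2 * a⁻¹) ^ 4 = 1 ∧
    (a⁻¹ * q⁻¹ ^ 2 * a⁻¹ * a) ^ 3 = (a⁻¹ * q⁻¹ ^ 2 * a⁻¹) ^ 2 := by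
  have h2' : q⁻¹ ^ 2 * a⁻¹ * q⁻¹ ^ 2 = a⁻¹ * q⁻¹ ^ 2 * a⁻¹ := by
    have := congrArg Inv.inv h2
    simpa [mul_inv_rev, inv_pow, mul_assoc] using this
  have h3' := h3
  rw [show (4:ℕ) = 3 + 1 from rfl, pow_succ, pow_succ, pow_succ, pow_one] at h3'
  constructor
  · have key : (a⁻¹ * q⁻¹ ^ 2 * a⁻¹) ^ 4
        = a⁻¹ * ((a ^ 2 * q ^ 2) * (a ^ 2 * q ^ 2) * (a ^ 2 * q ^ 2) * (a ^ 2 * q ^ 2))⁻¹ * a := by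
      rw [show (4:ℕ) = 3 + 1 from rfl, pow_succ, pow_succ, pow_succ, pow_one]; group
    rw [key, h3']; group
  · have key : (a⁻¹ * q⁻¹ ^ 2 * a⁻¹ * a) ^ 3
        = a⁻¹ * q⁻¹ ^ 2 * a⁻¹ * (q⁻¹ ^ 2 * a⁻¹ * q⁻¹ ^ 2) := by
      rw [show (3:ℕ) = 2 + 1 from rfl, pow_succ, pow_succ, pow_one]; group
    rw [key, h2']; conv_rhs => rw [sq]
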